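/- Let G and H be finite groups and let H^op × G denote the object of ^H Fin_G with left H-action on the first coordinate and right G-action on the second coordinate (h(a,b)g = (ha, bg)). Every epimorphism f: H^op × G → O in the category ^H Fin_G is a K-torsor, where K = f^{-1}(f(1,1)) is a subgroup of the group H^op × G acting on H^op × G by left multiplication; in particular the fibers of f are exactly the right cosets of K. -/

import Mathlib

open CategoryTheory CategoryTheory.Limits MulOpposite

namespace Paper

/-- A functor preserves pullbacks, finite coproducts, and epimorphisms. -/
def PreservesPCE {C : Type*} {D : Type*} [Category C] [Category D] (F : C ⥤ D) : Prop :=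
  Nonempty (PreservesLimitsOfShape WalkingCospan F) ∧
  (∀ (J : Type) [Finite J], Nonempty (PreservesColimitsOfShape (Discrete J) F)) ∧
  F.PreservesEpimorphisms

/-- `Fun_pce C D`: the full subcategory of the functor category spanned by the functors
preserving pullbacks, finite coproducts and epimorphisms. -/
abbrev FunPCE (C : Type*) (D : Type*) [Category C] [Category D] :=
  ObjectProperty.FullSubcategory (fun F : C ⥤ D => PreservesPCE F)

/-- Finite sets with an action of the monoid `M`. -/
abbrev ActCat (M : Type) [Monoid M] := Action FintypeCat.{0} M

/-- `Fin_G`: finite right `G`-sets (encoded as left `Gᵐᵒᵖ`-actions). -/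
abbrev FinRight (G : Type) [Group G] := ActCat Gᵐᵒᵖ

/-- `^G Fin`: the category of finite *free* left `G`-sets. -/
abbrev FinFreeL (G : Type) [Group G] :=
  ObjectProperty.FullSubcategory (fun X : ActCat G => ∀ (g : G) (x : X.V), ConcreteCategory.hom (X.ρ g) x = x → g = 1)

/-- Finite `(G,H)`-bisets: a left `G`-action and a commuting right `H`-action. -/
abbrev BiAct (G H : Type) [Group G] [Group H] := ActCat (G × Hᵐᵒᵖ)

/-- The left `G`-action of a `(G,H)`-biset is free. -/
def LeftFree {G H : Type} [Group G] [Group H] (X : BiAct G H) : Prop :=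
  ∀ (g : G) (x : X.V), ConcreteCategory.hom (X.ρ (g, 1)) x = x → g = 1

/-- `^G Fin_H`: finite `(G,H)`-bisets whose left `G`-action is free. -/
abbrev BiFin (G H : Type) [Group G] [Group H] :=
  ObjectProperty.FullSubcategory (fun X : BiAct G H => LeftFree X)

/-- The separable `(G,H)`-biset `G × T` attached to a finite right `H`-set `T`,
with actions `g • (g', t) • h = (g * g', t • h)`. -/
noncomputable def sepBiset (G H : Type) [Group G] [Group H] [Fintype G]
    (T : ActCat Hᵐᵒᵖ) : BiAct G H where
  V := FintypeCat.of (G × T.V)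
  ρ :=
    { toFun := fun m => FintypeCat.homMk (fun p : G × T.V => (m.1 * p.1, ConcreteCategory.hom (T.ρ m.2) p.2))
      map_one' := by
        refine FintypeCat.hom_ext _ _ fun p => ?_
        show ((1 : G) * p.1, ConcreteCategory.hom (T.ρ 1) p.2) = p
        simp
      map_mul' := by
        intro a b
        refine FintypeCat.hom_ext _ _ fun p => ?_
        show ((a.1 * b.1) * p.1, ConcreteCategory.hom (T.ρ (a.2 * b.2)) p.2)
          = (a.1 * (b.1 * p.1), ConcreteCategory.hom (T.ρ a.2) (ConcreteCategory.hom (T.ρ b.2) p.2))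
        rw [mul_assoc, map_mul]
        rfl }

/-- A `(G,H)`-biset is separable if it is isomorphic to `G × T`
for some finite right `H`-set `T`. -/
def Separable (G H : Type) [Group G] [Group H] [Fintype G] (X : BiAct G H) : Prop :=
  ∃ T : ActCat Hᵐᵒᵖ, Nonempty (X ≅ sepBiset G H T)

/-- `(^G Fin_H)^sep`: the full subcategory of separable bisets. -/
abbrev SepCat (G H : Type) [Group G] [Group H] [Fintype G] :=
  ObjectProperty.FullSubcategory (fun X : BiFin G H => Separable G H X.obj)

variable {G H : Type} [Group G] [Group H]

/-- The relation generating `X ×_{(H,G)} Y`: `(x·g, y) ~ (x, g·y)` and `(h·x, y) ~ (x, y·h)`. -/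
def pairRel (X : BiAct H G) (Y : BiAct G H) : X.V × Y.V → X.V × Y.V → Prop :=
  fun p q =>
    (∃ g : G, p.1 = ConcreteCategory.hom (X.ρ (1, op g)) q.1 ∧ q.2 = ConcreteCategory.hom (Y.ρ (g, 1)) p.2) ∨
    (∃ h : H, q.1 = ConcreteCategory.hom (X.ρ (h, 1)) p.1 ∧ p.2 = ConcreteCategory.hom (Y.ρ (1, op h)) q.2)

/-- `X ×_{(H,G)} Y`: the quotient of `X × Y` by the equivalence relation generated by
`(x·g, y) ~ (x, g·y)` and `(h·x, y) ~ (x, y·h)`. -/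
def PairSet (X : BiAct H G) (Y : BiAct G H) : Type := Quot (pairRel X Y)

instance (X : BiAct H G) (Y : BiAct G H) : Finite (PairSet X Y) :=
  Quot.finite _

/-- `X ×_{(H,G)} Y` as an object of the category of finite sets. -/
noncomputable def pairObj (X : BiAct H G) (Y : BiAct G H) : FintypeCat :=
  letI := Fintype.ofFinite (PairSet X Y)
  FintypeCat.of (PairSet X Y)

/-- Functoriality of `X ×_{(H,G)} Y` in `X`. -/
noncomputable def pairMapFst {X X' : BiAct H G} (f : X ⟶ X') (Y : BiAct G H) :
    pairObj X Y ⟶ pairObj X' Y :=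
  FintypeCat.homMk <| Quot.map (fun p => (f.hom p.1, p.2)) (by
    rintro ⟨x, y⟩ ⟨x', y'⟩ (⟨g, h1, h2⟩ | ⟨h, h1, h2⟩)
    · left
      refine ⟨g, ?_, h2⟩
      have := ConcreteCategory.congr_hom (f.comm (1, op g)) x'
      simp only [FintypeCat.comp_apply] at this
      dsimp only at h1 ⊢
      rw [h1]; exact this
    · right
      refine ⟨h, ?_, h2⟩
      have := ConcreteCategory.congr_hom (f.comm (h, 1)) x
      simp only [FintypeCat.comp_apply] at this
      dsimp only at h1 ⊢
      rw [h1]; exact this)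

/-- Functoriality of `X ×_{(H,G)} Y` in `Y`. -/
noncomputable def pairMapSnd (X : BiAct H G) {Y Y' : BiAct G H} (f : Y ⟶ Y') :
    pairObj X Y ⟶ pairObj X Y' :=
  FintypeCat.homMk <| Quot.map (fun p => (p.1, f.hom p.2)) (by
    rintro ⟨x, y⟩ ⟨x', y'⟩ (⟨g, h1, h2⟩ | ⟨h, h1, h2⟩)
    · left
      refine ⟨g, h1, ?_⟩
      have := ConcreteCategory.congr_hom (f.comm (g, 1)) y
      simp only [FintypeCat.comp_apply] at this
      dsimp only at h2 ⊢
      rw [h2]; exact this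
    · right
      refine ⟨h, h1, ?_⟩
      have := ConcreteCategory.congr_hom (f.comm (1, op h)) y'
      simp only [FintypeCat.comp_apply] at this
      dsimp only at h2 ⊢
      rw [h2]; exact this)

/-- For a fixed biset `X`, the functor `X ×_{(H,G)} -` on all of `^G Fin_H`. -/
noncomputable def pairFstFunctorRaw (X : BiAct H G) : BiAct G H ⥤ FintypeCat where
  obj Y := pairObj X Y
  map f := pairMapSnd X f
  map_id Y := by
    refine FintypeCat.hom_ext _ _ fun q => ?_
    induction q using Quot.ind
    rfl
  map_comp f g := by
    refine FintypeCat.hom_ext _ _ fun q => ?_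
    induction q using Quot.ind
    rfl

/-- For a fixed biset `X` in `^H Fin_G`, the functor `X ×_{(H,G)} -` on `(^G Fin_H)^sep`. -/
noncomputable def pairFstFunctor (G H : Type) [Group G] [Group H] [Fintype G]
    (X : BiAct H G) : SepCat G H ⥤ FintypeCat :=
  ObjectProperty.ι _ ⋙ ObjectProperty.ι _ ⋙ pairFstFunctorRaw X

/-- For a fixed biset `Y` in `^G Fin_H`, the functor `- ×_{(H,G)} Y` on `^H Fin_G`. -/
noncomputable def pairSndFunctor (G H : Type) [Group G] [Group H]
    (Y : BiAct G H) : BiFin H G ⥤ FintypeCat where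
  obj X := pairObj X.obj Y
  map f := pairMapFst f.hom Y
  map_id X := by
    refine FintypeCat.hom_ext _ _ fun q => ?_
    induction q using Quot.ind
    rfl
  map_comp f g := by
    refine FintypeCat.hom_ext _ _ fun q => ?_
    induction q using Quot.ind
    rfl

variable (G H) [Fintype G] [Fintype H]

/-- The functor `(^G Fin_H)^sep ⟶ Fun_pce(^H Fin_G, Fin)` induced by the pairing. -/
noncomputable def pairingPhi
    (h : ∀ Y : SepCat G H, PreservesPCE (pairSndFunctor G H Y.obj.obj)) :
    SepCat G H ⥤ FunPCE (BiFin H G) FintypeCat where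
  obj Y := ⟨pairSndFunctor G H Y.obj.obj, h Y⟩
  map {Y Y'} f := ObjectProperty.homMk
    { app := fun X => pairMapSnd X.obj f.hom.hom
      naturality := by
        intro X X' g
        refine FintypeCat.hom_ext _ _ fun q => ?_
        induction q using Quot.ind
        rfl }
  map_id Y := by
    apply ObjectProperty.hom_ext
    apply NatTrans.ext
    funext X
    refine FintypeCat.hom_ext _ _ fun q => ?_
    induction q using Quot.ind
    rfl
  map_comp f g := by
    apply ObjectProperty.hom_ext
    apply NatTrans.ext
    funext X
    refine FintypeCat.hom_ext _ _ fun q => ?_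
    induction q using Quot.ind
    rfl

/-- The functor `^H Fin_G ⟶ Fun_pce((^G Fin_H)^sep, Fin)` induced by the pairing. -/
noncomputable def pairingPsi
    (h : ∀ X : BiFin H G, PreservesPCE (pairFstFunctor G H X.obj)) :
    BiFin H G ⥤ FunPCE (SepCat G H) FintypeCat where
  obj X := ⟨pairFstFunctor G H X.obj, h X⟩
  map {X X'} f := ObjectProperty.homMk
    { app := fun Y => pairMapFst f.hom Y.obj.obj
      naturality := by
        intro Y Y' g
        refine FintypeCat.hom_ext _ _ fun q => ?_
        induction q using Quot.ind
        rfl }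
  map_id X := by
    apply ObjectProperty.hom_ext
    apply NatTrans.ext
    funext Y
    refine FintypeCat.hom_ext _ _ fun q => ?_
    induction q using Quot.ind
    rfl
  map_comp f g := by
    apply ObjectProperty.hom_ext
    apply NatTrans.ext
    funext Y
    refine FintypeCat.hom_ext _ _ fun q => ?_
    induction q using Quot.ind
    rfl

end Paper

namespace Paper

open CategoryTheory CategoryTheory.Limits

/-- A `K`-torsor in a category `C`: an object `X` with a `K`-action `ρ`, together with a
`K`-invariant epimorphism `f : X ⟶ Y`, such that for any coproduct of copies of `X`
indexed by the elements of `K`, the square whose top map restricts to the identity on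
each copy, whose left map restricts on the copy indexed by `k` to the action of `k`,
and whose remaining two maps are `f`, is a pullback square. -/
def IsKTorsor {C : Type*} [Category C] (K : Type*) [Group K]
    {X Y : C} (ρ : K →* CategoryTheory.End X) (f : X ⟶ Y) : Prop :=
  Epi f ∧ (∀ k : K, ρ k ≫ f = f) ∧
  ∀ (c : Cofan (fun _ : K => X)) (hc : IsColimit c),
    IsPullback (hc.desc (Cofan.mk X (fun _ => 𝟙 X)))
      (hc.desc (Cofan.mk X (fun k => ρ k))) f f

end Paper

namespace Paper

variable (H G : Type) [Group H] [Group G] [Fintype H] [Fintype G]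

noncomputable instance mulOppositeFintype (α : Type*) [Fintype α] : Fintype αᵐᵒᵖ :=
  Fintype.ofEquiv α MulOpposite.opEquiv

/-- The biset `H^op × G` in `^H Fin_G`: left `H`-action on the first coordinate and
right `G`-action on the second coordinate, i.e. `h • (a, b) • g = (h·a, b·g)`.
Both actions are right multiplications in the group `Hᵐᵒᵖ × G`. -/
noncomputable def regBiset : BiAct H G where
  V := FintypeCat.of (Hᵐᵒᵖ × G)
  ρ :=
    { toFun := fun m => FintypeCat.homMk (fun (e : Hᵐᵒᵖ × G) => e * (op m.1, m.2.unop))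
      map_one' := by
        refine FintypeCat.hom_ext _ _ fun (e : Hᵐᵒᵖ × G) => ?_
        show e * (op (1 : H), ((1 : Gᵐᵒᵖ)).unop) = e
        simp
      map_mul' := by
        intro a b
        refine FintypeCat.hom_ext _ _ fun (e : Hᵐᵒᵖ × G) => ?_
        show e * (op (a.1 * b.1), (a.2 * b.2).unop)
          = (e * (op b.1, b.2.unop)) * (op a.1, a.2.unop)
        rw [mul_assoc]
        congr 1 }

/-- `H^op × G` as an object of `^H Fin_G`. -/
noncomputable def regBiFin : BiFin H G :=
  ⟨regBiset H G, by
    intro h e he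
    have he' : (show Hᵐᵒᵖ × G from e) * (op h, ((1 : Gᵐᵒᵖ)).unop) = e := he
    have : (op h, ((1 : Gᵐᵒᵖ)).unop) = (1 : Hᵐᵒᵖ × G) := mul_eq_left.mp he'
    have := congrArg Prod.fst this
    simpa using congrArg unop this⟩

variable {H G} (O : BiFin H G) (f : regBiFin H G ⟶ O)

/-- `K = f⁻¹(f(1,1))`, a subgroup of the group `H^op × G`. -/
noncomputable def torsorSubgroup : Subgroup (Hᵐᵒᵖ × G) where
  carrier := {e | f.hom.hom e = f.hom.hom ((1 : Hᵐᵒᵖ × G) : (regBiFin H G).obj.V)}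
  one_mem' := rfl
  mul_mem' := by
    intro a b ha hb
    have ha' : f.hom.hom a = f.hom.hom ((1 : Hᵐᵒᵖ × G) : (regBiFin H G).obj.V) := ha
    have hb' : f.hom.hom b = f.hom.hom ((1 : Hᵐᵒᵖ × G) : (regBiFin H G).obj.V) := hb
    have hc := fun e : (regBiFin H G).obj.V => ConcreteCategory.congr_hom (f.hom.comm (b.1.unop, op b.2)) e
    simp only [FintypeCat.comp_apply] at hc
    show f.hom.hom (a * b) = f.hom.hom ((1 : Hᵐᵒᵖ × G) : (regBiFin H G).obj.V)
    have e1 : f.hom.hom (a * b) = ConcreteCategory.hom (O.obj.ρ (b.1.unop, op b.2)) (f.hom.hom a) := hc a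
    have e2 : f.hom.hom ((1 : Hᵐᵒᵖ × G) * b) = ConcreteCategory.hom (O.obj.ρ (b.1.unop, op b.2))
        (f.hom.hom ((1 : Hᵐᵒᵖ × G) : (regBiFin H G).obj.V)) := hc (1 : Hᵐᵒᵖ × G)
    rw [one_mul] at e2
    rw [e1, ha', ← e2, hb']
  inv_mem' := by
    intro a ha
    have ha' : f.hom.hom a = f.hom.hom ((1 : Hᵐᵒᵖ × G) : (regBiFin H G).obj.V) := ha
    have hc := fun e : (regBiFin H G).obj.V => ConcreteCategory.congr_hom (f.hom.comm ((a⁻¹).1.unop, op (a⁻¹).2)) e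
    simp only [FintypeCat.comp_apply] at hc
    show f.hom.hom (((a⁻¹ : Hᵐᵒᵖ × G)) : (regBiFin H G).obj.V) = f.hom.hom ((1 : Hᵐᵒᵖ × G) : (regBiFin H G).obj.V)
    have e1 : f.hom.hom ((1 : Hᵐᵒᵖ × G) * a⁻¹) = ConcreteCategory.hom (O.obj.ρ ((a⁻¹).1.unop, op (a⁻¹).2))
        (f.hom.hom ((1 : Hᵐᵒᵖ × G) : (regBiFin H G).obj.V)) := hc (1 : Hᵐᵒᵖ × G)
    have e2 : f.hom.hom (a * a⁻¹) = ConcreteCategory.hom (O.obj.ρ ((a⁻¹).1.unop, op (a⁻¹).2)) (f.hom.hom a) := hc a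
    rw [one_mul] at e1
    rw [e1, ← ha', ← e2, mul_inv_cancel]
    exact ha'.symm

/-- Left multiplication by elements of `K` on `H^op × G`, as an action by
endomorphisms in `^H Fin_G`. -/
noncomputable def torsorRho : ↥(torsorSubgroup O f) →* CategoryTheory.End (regBiFin H G) where
  toFun k :=
    ObjectProperty.homMk
    { hom := FintypeCat.homMk (fun (e : Hᵐᵒᵖ × G) => (k : Hᵐᵒᵖ × G) * e)
      comm := by
        intro m
        refine FintypeCat.hom_ext _ _ fun (e : Hᵐᵒᵖ × G) => ?_
        exact (mul_assoc (k : Hᵐᵒᵖ × G) e _).symm }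
  map_one' := by
    apply ObjectProperty.hom_ext
    apply Action.hom_ext
    refine FintypeCat.hom_ext _ _ fun (e : Hᵐᵒᵖ × G) => ?_
    exact one_mul e
  map_mul' k k' := by
    apply ObjectProperty.hom_ext
    apply Action.hom_ext
    refine FintypeCat.hom_ext _ _ fun (e : Hᵐᵒᵖ × G) => ?_
    exact mul_assoc (k : Hᵐᵒᵖ × G) (k' : Hᵐᵒᵖ × G) e

/-- Translation: `f (e * a) = a ⋅ f e` for the right action. -/
lemma f_mul (e a : Hᵐᵒᵖ × G) :
    f.hom.hom ((e * a : Hᵐᵒᵖ × G) : (regBiFin H G).obj.V)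
      = ConcreteCategory.hom (O.obj.ρ (a.1.unop, op a.2)) (f.hom.hom e) := by
  have h := ConcreteCategory.congr_hom (f.hom.comm (a.1.unop, op a.2)) e
  exact h

/-- The fibers of `f` are exactly the right cosets of `K`. -/
lemma fiber_iff (e e' : Hᵐᵒᵖ × G) :
    f.hom.hom e = f.hom.hom e' ↔ ∃ k : torsorSubgroup O f, e = (k : Hᵐᵒᵖ × G) * e' := by
  constructor
  · intro h
    have hmem : e * e'⁻¹ ∈ torsorSubgroup O f := by
      show f.hom.hom ((e * e'⁻¹ : Hᵐᵒᵖ × G) : (regBiFin H G).obj.V)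
        = f.hom.hom ((1 : Hᵐᵒᵖ × G) : (regBiFin H G).obj.V)
      have h1 := f_mul O f e e'⁻¹
      have h2 := f_mul O f e' e'⁻¹
      rw [mul_inv_cancel] at h2
      rw [h1, h, ← h2]
    exact ⟨⟨e * e'⁻¹, hmem⟩, by group⟩
  · rintro ⟨k, rfl⟩
    have hk : f.hom.hom (((k : Hᵐᵒᵖ × G)) : (regBiFin H G).obj.V)
        = f.hom.hom ((1 : Hᵐᵒᵖ × G) : (regBiFin H G).obj.V) := k.2
    have h1 := f_mul O f (k : Hᵐᵒᵖ × G) e'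
    have h2 := f_mul O f (1 : Hᵐᵒᵖ × G) e'
    rw [one_mul] at h2
    rw [h1, hk, ← h2]

/-- `f` is invariant under left multiplication by elements of `K`. -/
lemma f_inv (k : torsorSubgroup O f) (e : Hᵐᵒᵖ × G) :
    f.hom.hom (((k : Hᵐᵒᵖ × G) * e : Hᵐᵒᵖ × G) : (regBiFin H G).obj.V) = f.hom.hom e :=
  (fiber_iff O f _ e).mpr ⟨k, rfl⟩

/-- The canonical coproduct of `K` copies of `H^op × G` in `^H Fin_G`. -/
noncomputable def canObj : BiFin H G :=
  letI : Fintype (↥(torsorSubgroup O f)) := Fintype.ofFinite _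
  ⟨{ V := FintypeCat.of (↥(torsorSubgroup O f) × (Hᵐᵒᵖ × G))
     ρ :=
       { toFun := fun m => FintypeCat.homMk (fun (p : ↥(torsorSubgroup O f) × (Hᵐᵒᵖ × G)) => (p.1, p.2 * (op m.1, m.2.unop)))
         map_one' := by
           refine FintypeCat.hom_ext _ _ fun (p : ↥(torsorSubgroup O f) × (Hᵐᵒᵖ × G)) => ?_
           show (p.1, p.2 * (op (1 : H), ((1 : Gᵐᵒᵖ)).unop)) = p
           rw [show ((op (1 : H), ((1 : Gᵐᵒᵖ)).unop) : Hᵐᵒᵖ × G) = 1 from rfl, mul_one]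
         map_mul' := by
           intro a b
           refine FintypeCat.hom_ext _ _ fun (p : ↥(torsorSubgroup O f) × (Hᵐᵒᵖ × G)) => ?_
           show (p.1, p.2 * (op (a.1 * b.1), (a.2 * b.2).unop))
             = (p.1, (p.2 * (op b.1, b.2.unop)) * (op a.1, a.2.unop))
           rw [mul_assoc]
           rfl } },
   by
    intro h p hp
    have hp2 : p.2 * (op h, ((1 : Gᵐᵒᵖ)).unop) = p.2 := congrArg Prod.snd hp
    have : ((op h, ((1 : Gᵐᵒᵖ)).unop) : Hᵐᵒᵖ × G) = 1 := mul_eq_left.mp hp2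
    have := congrArg Prod.fst this
    simpa using congrArg unop this⟩

/-- The injections into the canonical coproduct. -/
noncomputable def canInj (k : ↥(torsorSubgroup O f)) : regBiFin H G ⟶ canObj O f :=
  ObjectProperty.homMk
  { hom := FintypeCat.homMk (fun (e : Hᵐᵒᵖ × G) => ((k, e) : ↥(torsorSubgroup O f) × (Hᵐᵒᵖ × G)))
    comm := by
      intro m
      refine FintypeCat.hom_ext _ _ fun (e : Hᵐᵒᵖ × G) => ?_
      rfl }

/-- The canonical cofan. -/
noncomputable def canCofan : Cofan (fun _ : ↥(torsorSubgroup O f) => regBiFin H G) :=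
  Cofan.mk (canObj O f) (canInj O f)

/-- The canonical cofan is a colimit. -/
noncomputable def canIsColimit : IsColimit (canCofan O f) := by
  refine mkCofanColimit _
    (fun t => ObjectProperty.homMk
      { hom := FintypeCat.homMk (fun (p : ↥(torsorSubgroup O f) × (Hᵐᵒᵖ × G)) => (t.inj p.1).hom.hom p.2)
        comm := by
          intro m
          refine FintypeCat.hom_ext _ _ fun (p : ↥(torsorSubgroup O f) × (Hᵐᵒᵖ × G)) => ?_
          have := ConcreteCategory.congr_hom ((t.inj p.1).hom.comm m) p.2
          exact this })
    (fun t k => ?_) (fun t m hm => ?_)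
  · apply ObjectProperty.hom_ext
    apply Action.hom_ext
    rfl
  · apply ObjectProperty.hom_ext
    apply Action.hom_ext
    refine FintypeCat.hom_ext _ _ fun (p : ↥(torsorSubgroup O f) × (Hᵐᵒᵖ × G)) => ?_
    have := ConcreteCategory.congr_hom (congrArg (fun g => Action.Hom.hom (InducedCategory.Hom.hom g)) (hm p.1)) p.2
    exact this

/-- Identity retyping helper for elements of `H^op × G`. -/
abbrev toE (x : (regBiFin H G).obj.V) : Hᵐᵒᵖ × G := x

/-- Identity retyping helper for elements of the canonical coproduct. -/
abbrev toP (x : (canObj O f).obj.V) : ↥(torsorSubgroup O f) × (Hᵐᵒᵖ × G) := x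

/-- **Statement 8** (Lemma `EpiTors`). Every epimorphism `f : H^op × G → O` in
`^H Fin_G` is a `K`-torsor, where `K = f⁻¹(f(1,1))` is a subgroup of the group
`H^op × G` acting on `H^op × G` by left multiplication; in particular the fibers of `f`
are exactly the right cosets of `K`. -/
theorem epi_is_torsor (hf : Epi f) :
    IsKTorsor (↥(torsorSubgroup O f)) (torsorRho O f) f ∧
      ∀ e e' : Hᵐᵒᵖ × G, f.hom.hom e = f.hom.hom e' ↔
        ∃ k : torsorSubgroup O f, e = (k : Hᵐᵒᵖ × G) * e' := by
  have hinv : ∀ k : ↥(torsorSubgroup O f), torsorRho O f k ≫ f = f := by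
    intro k
    apply ObjectProperty.hom_ext
    apply Action.hom_ext
    refine FintypeCat.hom_ext _ _ fun (e : Hᵐᵒᵖ × G) => ?_
    exact f_inv O f k e
  refine ⟨⟨hf, hinv, ?_⟩, fiber_iff O f⟩
  intro c hc
  set P := (canIsColimit O f).desc (Cofan.mk (regBiFin H G) fun _ => 𝟙 (regBiFin H G)) with hPdef
  set Q := (canIsColimit O f).desc (Cofan.mk (regBiFin H G) fun k => torsorRho O f k) with hQdef
  have hPk : ∀ k, (canCofan O f).inj k ≫ P = 𝟙 (regBiFin H G) :=
    fun k => (canIsColimit O f).fac _ ⟨k⟩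
  have hQk : ∀ k, (canCofan O f).inj k ≫ Q = torsorRho O f k :=
    fun k => (canIsColimit O f).fac _ ⟨k⟩
  have Pval : ∀ (k : ↥(torsorSubgroup O f)) (e : Hᵐᵒᵖ × G),
      P.hom.hom ((k, e) : ↥(torsorSubgroup O f) × (Hᵐᵒᵖ × G)) = e := by
    intro k e
    have := ConcreteCategory.congr_hom (congrArg (fun g => Action.Hom.hom (InducedCategory.Hom.hom g)) (hPk k)) e
    exact this
  have Qval : ∀ (k : ↥(torsorSubgroup O f)) (e : Hᵐᵒᵖ × G),
      Q.hom.hom ((k, e) : ↥(torsorSubgroup O f) × (Hᵐᵒᵖ × G)) = (k : Hᵐᵒᵖ × G) * e := by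
    intro k e
    have := ConcreteCategory.congr_hom (congrArg (fun g => Action.Hom.hom (InducedCategory.Hom.hom g)) (hQk k)) e
    exact this
  have comm : P ≫ f = Q ≫ f := by
    apply Cofan.IsColimit.hom_ext (canIsColimit O f)
    intro k
    rw [← Category.assoc, ← Category.assoc, hPk, hQk, Category.id_comp]
    exact (hinv k).symm
  -- the membership of the "difference" of two points in the same fiber
  have memdiff : ∀ {Z : BiFin H G} (a b : Z ⟶ (regBiFin H G)) (hab : a ≫ f = b ≫ f)
      (z : Z.obj.V), (toE (b.hom.hom z) * (toE (a.hom.hom z))⁻¹) ∈ torsorSubgroup O f := by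
    intro Z a b hab z
    have hcond : f.hom.hom (b.hom.hom z) = f.hom.hom (a.hom.hom z) := by
      have := ConcreteCategory.congr_hom (congrArg (fun g => Action.Hom.hom (InducedCategory.Hom.hom g)) hab) z
      exact this.symm
    show f.hom.hom ((toE (b.hom.hom z) * (toE (a.hom.hom z))⁻¹ : Hᵐᵒᵖ × G) : (regBiFin H G).obj.V)
      = f.hom.hom ((1 : Hᵐᵒᵖ × G) : (regBiFin H G).obj.V)
    have h1 := f_mul O f (toE (b.hom.hom z)) (toE (a.hom.hom z))⁻¹
    have h2 := f_mul O f (toE (a.hom.hom z)) (toE (a.hom.hom z))⁻¹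
    rw [mul_inv_cancel] at h2
    rw [h1, hcond, ← h2]
  have core : IsPullback P Q f f := by
    refine IsPullback.of_isLimit' ⟨comm⟩ ?_
    refine PullbackCone.IsLimit.mk _
      (fun s => ObjectProperty.homMk
        { hom := FintypeCat.homMk (fun z =>
            ((⟨toE (s.snd.hom.hom z) * (toE (s.fst.hom.hom z))⁻¹, memdiff s.fst s.snd s.condition z⟩,
              s.fst.hom.hom z) : ↥(torsorSubgroup O f) × (Hᵐᵒᵖ × G)))
          comm := by
            intro m
            refine FintypeCat.hom_ext _ _ fun z => ?_
            have hfst : s.fst.hom.hom (ConcreteCategory.hom (s.pt.obj.ρ m) z)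
                = toE (s.fst.hom.hom z) * (op m.1, m.2.unop) := by
              have := ConcreteCategory.congr_hom (s.fst.hom.comm m) z
              exact this
            have hsnd : s.snd.hom.hom (ConcreteCategory.hom (s.pt.obj.ρ m) z)
                = toE (s.snd.hom.hom z) * (op m.1, m.2.unop) := by
              have := ConcreteCategory.congr_hom (s.snd.hom.comm m) z
              exact this
            show ((_, toE (s.fst.hom.hom (ConcreteCategory.hom (s.pt.obj.ρ m) z))) :
                  ↥(torsorSubgroup O f) × (Hᵐᵒᵖ × G))
              = ((_, toE (s.fst.hom.hom z) * (op m.1, m.2.unop)) :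
                  ↥(torsorSubgroup O f) × (Hᵐᵒᵖ × G))
            refine Prod.ext ?_ hfst
            apply Subtype.ext
            show toE (s.snd.hom.hom (ConcreteCategory.hom (s.pt.obj.ρ m) z)) * (toE (s.fst.hom.hom (ConcreteCategory.hom (s.pt.obj.ρ m) z)))⁻¹
              = toE (s.snd.hom.hom z) * (toE (s.fst.hom.hom z))⁻¹
            rw [hfst, hsnd]
            group })
      (fun s => ?_) (fun s => ?_) (fun s m' h1 h2 => ?_)
    · apply ObjectProperty.hom_ext
      apply Action.hom_ext
      refine FintypeCat.hom_ext _ _ fun z => ?_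
      exact Pval ⟨toE (s.snd.hom.hom z) * (toE (s.fst.hom.hom z))⁻¹, memdiff s.fst s.snd s.condition z⟩ (toE (s.fst.hom.hom z))
    · apply ObjectProperty.hom_ext
      apply Action.hom_ext
      refine FintypeCat.hom_ext _ _ fun z => ?_
      have := Qval ⟨toE (s.snd.hom.hom z) * (toE (s.fst.hom.hom z))⁻¹, memdiff s.fst s.snd s.condition z⟩
        (toE (s.fst.hom.hom z))
      rw [inv_mul_cancel_right] at this
      exact this
    · apply ObjectProperty.hom_ext
      apply Action.hom_ext
      refine FintypeCat.hom_ext _ _ fun z => ?_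
      have e1 : P.hom.hom (m'.hom.hom z) = s.fst.hom.hom z := by
        have := ConcreteCategory.congr_hom (congrArg (fun g => Action.Hom.hom (InducedCategory.Hom.hom g)) h1) z
        exact this
      have e2 : Q.hom.hom (m'.hom.hom z) = s.snd.hom.hom z := by
        have := ConcreteCategory.congr_hom (congrArg (fun g => Action.Hom.hom (InducedCategory.Hom.hom g)) h2) z
        exact this
      have hp2 : (toP O f (m'.hom.hom z)).2 = toE (s.fst.hom.hom z) :=
        (Pval (toP O f (m'.hom.hom z)).1 (toP O f (m'.hom.hom z)).2).symm.trans e1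
      have hp1 : ((toP O f (m'.hom.hom z)).1 : Hᵐᵒᵖ × G) * (toP O f (m'.hom.hom z)).2 = toE (s.snd.hom.hom z) :=
        (Qval (toP O f (m'.hom.hom z)).1 (toP O f (m'.hom.hom z)).2).symm.trans e2
      show toP O f (m'.hom.hom z) = ((⟨toE (s.snd.hom.hom z) * (toE (s.fst.hom.hom z))⁻¹, _⟩,
        toE (s.fst.hom.hom z)) : ↥(torsorSubgroup O f) × (Hᵐᵒᵖ × G))
      refine Prod.ext ?_ hp2
      apply Subtype.ext
      show ((toP O f (m'.hom.hom z)).1 : Hᵐᵒᵖ × G) = toE (s.snd.hom.hom z) * (toE (s.fst.hom.hom z))⁻¹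
      rw [← hp1, ← hp2]
      group
  let iso := hc.coconePointUniqueUpToIso (canIsColimit O f)
  have hdesc : ∀ d : ↥(torsorSubgroup O f) → ((regBiFin H G) ⟶ (regBiFin H G)),
      hc.desc (Cofan.mk (regBiFin H G) d) = iso.hom ≫ (canIsColimit O f).desc (Cofan.mk (regBiFin H G) d) := by
    intro d
    apply Cofan.IsColimit.hom_ext hc
    intro k
    have L : c.inj k ≫ hc.desc (Cofan.mk (regBiFin H G) d) = d k := hc.fac _ ⟨k⟩
    have R : (canCofan O f).inj k ≫ (canIsColimit O f).desc (Cofan.mk (regBiFin H G) d) = d k :=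
      (canIsColimit O f).fac _ ⟨k⟩
    have M : c.inj k ≫ iso.hom = (canCofan O f).inj k :=
      hc.comp_coconePointUniqueUpToIso_hom (canIsColimit O f) ⟨k⟩
    rw [L, ← Category.assoc, M, R]
  have g1 : hc.desc (Cofan.mk (regBiFin H G) fun _ => 𝟙 (regBiFin H G)) = iso.hom ≫ P := hdesc _
  have g2 : hc.desc (Cofan.mk (regBiFin H G) fun k => torsorRho O f k) = iso.hom ≫ Q := hdesc _
  rw [g1, g2]
  exact core.of_iso iso.symm (Iso.refl _) (Iso.refl _) (Iso.refl _)
    (by simp) (by simp) (by simp) (by simp)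

end Paper
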